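/- arXiv:2508.21242 — 2 statements merged into one kernel-verified Lean document; each statement's English description precedes it below -/
import Mathlib

section
/- Let X be a Banach space and T : X → X a bounded linear operator with ‖T − T²‖ ≤ θ < 1/4. Let S = Σ_{m=0}^∞ binom(2m,m)(T − T²)^m and P = (1/2)(I − (I − 2T)S). Then P is a projection, i.e., P² = P. -/
open Finset

private lemma cb_reflect (m : ℕ) :
    ∑ k ∈ range (m + 1), (k : ℝ) * ((Nat.centralBinom k : ℝ) * (Nat.centralBinom (m - k) : ℝ))
      = ∑ k ∈ range (m + 1),
        ((m - k : ℕ) : ℝ) * ((Nat.centralBinom k : ℝ) * (Nat.centralBinom (m - k) : ℝ)) := by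
  rw [← Finset.sum_range_reflect
    (fun k => (k : ℝ) * ((Nat.centralBinom k : ℝ) * (Nat.centralBinom (m - k) : ℝ))) (m + 1)]
  refine Finset.sum_congr rfl fun k hk => ?_
  have hk' : k ≤ m := by simpa [Nat.lt_succ_iff] using hk
  have h1 : m + 1 - 1 - k = m - k := by omega
  have h2 : m - (m - k) = k := by omega
  rw [h1, h2]
  ring

private lemma cb_double (m : ℕ) :
    2 * ∑ k ∈ range (m + 1), (k : ℝ) * ((Nat.centralBinom k : ℝ) * (Nat.centralBinom (m - k) : ℝ))
      = (m : ℝ) * ∑ k ∈ range (m + 1), (Nat.centralBinom k : ℝ) * (Nat.centralBinom (m - k) : ℝ) := by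
  rw [two_mul]
  nth_rewrite 2 [cb_reflect]
  rw [← Finset.sum_add_distrib, Finset.mul_sum]
  refine Finset.sum_congr rfl fun k hk => ?_
  have hk' : k ≤ m := by simpa [Nat.lt_succ_iff] using hk
  rw [Nat.cast_sub hk']
  ring

private lemma cb_conv (n : ℕ) :
    ∑ k ∈ range (n + 1), (Nat.centralBinom k : ℝ) * (Nat.centralBinom (n - k) : ℝ)
      = 4 ^ n := by
  induction n with
  | zero => simp [Nat.centralBinom]
  | succ n ih =>
    have hne : ((n : ℝ) + 1) ≠ 0 := by positivity
    refine mul_left_cancel₀ hne ?_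
    have key : ((n : ℝ) + 1) *
        ∑ k ∈ range (n + 2), (Nat.centralBinom k : ℝ) * (Nat.centralBinom (n + 1 - k) : ℝ)
        = 2 * ∑ k ∈ range (n + 2),
            (k : ℝ) * ((Nat.centralBinom k : ℝ) * (Nat.centralBinom (n + 1 - k) : ℝ)) := by
      rw [cb_double (n + 1)]
      push_cast
      ring
    rw [key]
    have shift : ∑ k ∈ range (n + 2),
        (k : ℝ) * ((Nat.centralBinom k : ℝ) * (Nat.centralBinom (n + 1 - k) : ℝ))
        = ∑ k ∈ range (n + 1),
          ((k : ℝ) + 1) * ((Nat.centralBinom (k + 1) : ℝ) * (Nat.centralBinom (n - k) : ℝ)) := by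
      rw [Finset.sum_range_succ' (fun k =>
        (k : ℝ) * ((Nat.centralBinom k : ℝ) * (Nat.centralBinom (n + 1 - k) : ℝ))) (n + 1)]
      simp only [Nat.cast_zero, zero_mul, add_zero]
      refine Finset.sum_congr rfl fun k _ => ?_
      have h : n + 1 - (k + 1) = n - k := by omega
      rw [h]
      push_cast; ring
    have rec' : ∀ k : ℕ, ((k : ℝ) + 1) * (Nat.centralBinom (k + 1) : ℝ)
        = (4 * k + 2) * (Nat.centralBinom k : ℝ) := by
      intro k
      have h2 : (((k + 1) * Nat.centralBinom (k + 1) : ℕ) : ℝ)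
          = ((2 * (2 * k + 1) * Nat.centralBinom k : ℕ) : ℝ) := by
        exact_mod_cast congrArg (Nat.cast (R := ℝ)) (Nat.succ_mul_centralBinom_succ k)
      push_cast at h2
      linarith
    have step : ∑ k ∈ range (n + 1),
        ((k : ℝ) + 1) * ((Nat.centralBinom (k + 1) : ℝ) * (Nat.centralBinom (n - k) : ℝ))
        = 4 * ∑ k ∈ range (n + 1),
            (k : ℝ) * ((Nat.centralBinom k : ℝ) * (Nat.centralBinom (n - k) : ℝ))
          + 2 * ∑ k ∈ range (n + 1),
            (Nat.centralBinom k : ℝ) * (Nat.centralBinom (n - k) : ℝ) := by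
      rw [Finset.mul_sum, Finset.mul_sum, ← Finset.sum_add_distrib]
      refine Finset.sum_congr rfl fun k _ => ?_
      calc ((k : ℝ) + 1) * ((Nat.centralBinom (k + 1) : ℝ) * (Nat.centralBinom (n - k) : ℝ))
          = (((k : ℝ) + 1) * (Nat.centralBinom (k + 1) : ℝ)) * (Nat.centralBinom (n - k) : ℝ) := by
            ring
        _ = ((4 * k + 2) * (Nat.centralBinom k : ℝ)) * (Nat.centralBinom (n - k) : ℝ) := by
            rw [rec' k]
        _ = 4 * ((k : ℝ) * ((Nat.centralBinom k : ℝ) * (Nat.centralBinom (n - k) : ℝ)))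
            + 2 * ((Nat.centralBinom k : ℝ) * (Nat.centralBinom (n - k) : ℝ)) := by ring
    rw [shift, step, ih]
    have hX : 2 * ∑ k ∈ range (n + 1),
        (k : ℝ) * ((Nat.centralBinom k : ℝ) * (Nat.centralBinom (n - k) : ℝ))
        = (n : ℝ) * 4 ^ n := by
      rw [cb_double n, ih]
    have hp : (4 : ℝ) ^ (n + 1) = 4 ^ n * 4 := pow_succ 4 n
    nlinarith [hX]

set_option maxHeartbeats 1000000
set_option synthInstance.maxHeartbeats 1000000

/-- `P = (1/2)(I - (I - 2T)S)` is a projection. -/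
theorem stmt_7 {X : Type*} [NormedAddCommGroup X] [NormedSpace ℝ X] [CompleteSpace X]
    (T : X →L[ℝ] X) (θ : ℝ) (hθ : θ < 1 / 4) (hT : ‖T - T ^ 2‖ ≤ θ)
    (S : X →L[ℝ] X)
    (hS : HasSum (fun m : ℕ => (Nat.centralBinom m : ℝ) • (T - T ^ 2) ^ m) S) :
    ((1 / 2 : ℝ) • ((1 : X →L[ℝ] X) - ((1 : X →L[ℝ] X) - 2 • T) * S)) ^ 2 =
      (1 / 2 : ℝ) • ((1 : X →L[ℝ] X) - ((1 : X →L[ℝ] X) - 2 • T) * S) := by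
  set A : X →L[ℝ] X := T - T ^ 2 with hA
  set f : ℕ → (X →L[ℝ] X) := fun m => (Nat.centralBinom m : ℝ) • A ^ m with hf
  -- basic norm facts
  have hθ0 : 0 ≤ θ := le_trans (norm_nonneg _) hT
  have h4θ : 4 * θ < 1 := by linarith
  have hcb_le : ∀ m : ℕ, (Nat.centralBinom m : ℝ) ≤ 4 ^ m := by
    intro m
    have h : Nat.centralBinom m ≤ 4 ^ m := by
      have h1 : (2 * m).choose m ≤ ∑ i ∈ range (2 * m + 1), (2 * m).choose i :=
        Finset.single_le_sum (f := fun i => (2 * m).choose i) (fun i _ => Nat.zero_le _)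
          (Finset.mem_range.mpr (by omega))
      rw [Nat.sum_range_choose] at h1
      calc Nat.centralBinom m = (2 * m).choose m := rfl
        _ ≤ 2 ^ (2 * m) := h1
        _ = 4 ^ m := by rw [pow_mul]; norm_num
    exact_mod_cast h
  have hApow : ∀ m : ℕ, ‖A ^ m‖ ≤ ‖A‖ ^ m := by
    intro m
    match m with
    | 0 => rw [pow_zero, pow_zero]; exact ContinuousLinearMap.norm_id_le
    | Nat.succ k => exact norm_pow_le' A k.succ_pos
  have hsummable : Summable fun m : ℕ => ‖f m‖ := by
    apply Summable.of_nonneg_of_le (fun m => norm_nonneg _)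
      (fun m => ?_) (summable_geometric_of_lt_one (by positivity) h4θ)
    calc ‖f m‖ ≤ ‖(Nat.centralBinom m : ℝ)‖ * ‖A ^ m‖ := ContinuousLinearMap.opNorm_smul_le _ _
      _ = Nat.centralBinom m * ‖A ^ m‖ := by rw [Real.norm_natCast]
      _ ≤ Nat.centralBinom m * ‖A‖ ^ m :=
          mul_le_mul_of_nonneg_left (hApow m) (by positivity)
      _ ≤ 4 ^ m * θ ^ m :=
          mul_le_mul (hcb_le m) (pow_le_pow_left₀ (norm_nonneg _) hT m)
            (by positivity) (by positivity)
      _ = (4 * θ) ^ m := by rw [mul_pow]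
  have hx : ‖(4 : ℝ) • A‖ < 1 := by
    calc ‖(4 : ℝ) • A‖ ≤ ‖(4 : ℝ)‖ * ‖A‖ := ContinuousLinearMap.opNorm_smul_le _ _
      _ = 4 * ‖A‖ := by rw [Real.norm_ofNat]
      _ ≤ 4 * θ := by linarith
      _ < 1 := h4θ
  -- S as a tsum
  have hSt : S = ∑' m, f m := hS.tsum_eq.symm
  -- S * S = geometric series of 4 • A
  have hSS : S * S = ∑' n : ℕ, ((4 : ℝ) • A) ^ n := by
    rw [hSt, tsum_mul_tsum_eq_tsum_sum_antidiagonal_of_summable_norm hsummable hsummable]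
    congr 1
    funext n
    rw [Finset.Nat.sum_antidiagonal_eq_sum_range_succ_mk]
    have hterm : ∀ k ∈ range (n + 1), f k * f (n - k)
        = ((Nat.centralBinom k : ℝ) * (Nat.centralBinom (n - k) : ℝ)) • A ^ n := by
      intro k hk
      have hk' : k ≤ n := by simpa [Nat.lt_succ_iff] using hk
      calc f k * f (n - k)
          = ((Nat.centralBinom k : ℝ) • A ^ k) * ((Nat.centralBinom (n - k) : ℝ) • A ^ (n - k)) :=
            rfl
        _ = ((Nat.centralBinom k : ℝ) * (Nat.centralBinom (n - k) : ℝ)) • (A ^ k * A ^ (n - k)) :=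
            smul_mul_smul_comm _ _ _ _
        _ = ((Nat.centralBinom k : ℝ) * (Nat.centralBinom (n - k) : ℝ)) • A ^ n := by
            rw [← pow_add, Nat.add_sub_cancel' hk']
    rw [Finset.sum_congr rfl hterm, ← Finset.sum_smul, cb_conv]
    exact (smul_pow (4 : ℝ) A n).symm
  -- commutation
  have hTA : Commute T A := (Commute.refl T).sub_right ((Commute.refl T).pow_right 2)
  have hBS : Commute ((1 : X →L[ℝ] X) - 2 • T) S := by
    rw [hSt]
    refine Commute.tsum_right _ fun m => ?_
    have h1 : Commute ((1 : X →L[ℝ] X) - 2 • T) (A ^ m) :=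
      Commute.pow_right ((Commute.one_left A).sub_left (hTA.smul_left 2)) m
    exact h1.smul_right _
  -- B * B = 1 - 4 • A
  have hBB : ((1 : X →L[ℝ] X) - 2 • T) * ((1 : X →L[ℝ] X) - 2 • T)
      = (1 : X →L[ℝ] X) - (4 : ℝ) • A := by
    have h2 : (2 : ℕ) • T = T + T := two_smul ℕ T
    have h4 : (4 : ℝ) • A = A + A + A + A := by module
    rw [h2, h4, hA]
    noncomm_ring
  -- (B * S) ^ 2 = 1
  set B : X →L[ℝ] X := (1 : X →L[ℝ] X) - 2 • T with hB
  clear_value B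
  have hkey : (B * S) * (B * S) = 1 := by
    have h1 : (B * S) * (B * S) = (B * B) * (S * S) := by
      rw [mul_assoc, ← mul_assoc S B S, ← hBS.eq, mul_assoc, ← mul_assoc]
    rw [h1, hBB, hSS, mul_neg_geom_series _ hx]
  -- conclude
  rw [sq, smul_mul_smul_comm]
  have hexp : ((1 : X →L[ℝ] X) - B * S) * ((1 : X →L[ℝ] X) - B * S)
      = (2 : ℝ) • ((1 : X →L[ℝ] X) - B * S) := by
    rw [mul_sub, sub_mul, sub_mul, hkey, two_smul]
    simp only [one_mul, mul_one]
    abel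
  rw [hexp, smul_smul]
  norm_num
end

section
/- Let X be a Banach space, ε > 0, λ ≥ 1, and T a bounded operator with ‖T‖ ≤ λ. There exists θ = θ(λ, ε) ∈ (0, 1/4), depending continuously on (λ, ε) and not on T, such that if ‖T − T²‖ ≤ θ, then the projection P = (1/2)(I − (I − 2T)S) (with S the central-binomial power series in T − T²) satisfies: for every x ∈ B_X with ‖Tx − x‖ < ε/2, we have ‖Px − x‖ < ε. -/
private lemma centralBinom_le_four_pow' (m : ℕ) : (Nat.centralBinom m : ℝ) ≤ 4 ^ m := by
  have h : Nat.centralBinom m ≤ 4 ^ m := by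
    calc Nat.centralBinom m = (2*m).choose m := rfl
    _ ≤ ∑ i ∈ Finset.range (2*m+1), (2*m).choose i :=
        Finset.single_le_sum (fun _ _ => Nat.zero_le _) (by simp; omega)
    _ = 2^(2*m) := Nat.sum_range_choose (2*m)
    _ = 4^m := by rw [pow_mul]; norm_num
  exact_mod_cast h

set_option synthInstance.maxHeartbeats 1000000 in
private lemma key_identity {X : Type*} [NormedAddCommGroup X] [NormedSpace ℝ X]
    (T S : X →L[ℝ] X) :
    ((1 / 2 : ℝ) • ((1 : X →L[ℝ] X) - ((1 : X →L[ℝ] X) - 2 • T) * S)) - T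
      = (1/2 : ℝ) • (((1 : X →L[ℝ] X) - 2 • T) * (1 - S)) := by
  have h2 : (2 : ℕ) • T = (2:ℝ) • T := by
    rw [← Nat.cast_smul_eq_nsmul ℝ]; norm_num
  rw [h2]
  simp only [mul_sub, sub_mul, mul_one, one_mul, smul_sub, smul_mul_assoc, smul_smul]
  module

set_option maxHeartbeats 2000000 in
set_option synthInstance.maxHeartbeats 1000000 in
/-- there is a continuous choice `(λ, ε) ↦ θ(λ, ε) ∈ (0, 1/4)`, independent of
`T`, such that whenever `‖T‖ ≤ λ` and `‖T - T²‖ ≤ θ`, the projection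
`P = (1/2)(I - (I - 2T)S)` satisfies `‖Px - x‖ < ε` for all `x` in the unit ball with
`‖Tx - x‖ < ε/2`. -/
theorem stmt_12 {X : Type*} [NormedAddCommGroup X] [NormedSpace ℝ X] [CompleteSpace X] :
    ∃ θ : ℝ × ℝ → ℝ, Continuous θ ∧
      ∀ lam ε : ℝ, 1 ≤ lam → 0 < ε →
        θ (lam, ε) ∈ Set.Ioo (0 : ℝ) (1 / 4) ∧
        ∀ T S : X →L[ℝ] X, ‖T‖ ≤ lam → ‖T - T ^ 2‖ ≤ θ (lam, ε) →
          HasSum (fun m : ℕ => (Nat.centralBinom m : ℝ) • (T - T ^ 2) ^ m) S →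
          ∀ x : X, ‖x‖ ≤ 1 → ‖T x - x‖ < ε / 2 →
            ‖((1 / 2 : ℝ) • ((1 : X →L[ℝ] X) - ((1 : X →L[ℝ] X) - 2 • T) * S)) x - x‖ < ε := by
  refine ⟨fun p => (1/8) * min 1 (|p.2| / (1 + 2 * max 1 |p.1| + |p.2|)), ?_, ?_⟩
  · have hden : ∀ p : ℝ × ℝ, 1 + 2 * max 1 |p.1| + |p.2| ≠ 0 := by
      intro p
      have h1 : (1:ℝ) ≤ max 1 |p.1| := le_max_left _ _
      have h2 : (0:ℝ) ≤ |p.2| := abs_nonneg _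
      positivity
    apply Continuous.mul continuous_const
    apply Continuous.min continuous_const
    exact Continuous.div (by fun_prop) (by fun_prop) hden
  · intro lam ε hlam hε
    have hlam0 : (0:ℝ) ≤ lam := le_trans zero_le_one hlam
    have hsimp : (fun p : ℝ × ℝ => (1/8) * min 1 (|p.2| / (1 + 2 * max 1 |p.1| + |p.2|)))
        (lam, ε) = (1/8) * min 1 (ε / (1 + 2 * lam + ε)) := by
      simp [abs_of_nonneg hlam0, abs_of_pos hε, max_eq_right hlam]
    rw [hsimp]
    set θ0 : ℝ := (1/8) * min 1 (ε / (1 + 2 * lam + ε)) with hθ0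
    have hD : (0:ℝ) < 1 + 2 * lam + ε := by linarith
    have hθpos : 0 < θ0 := by
      apply mul_pos (by norm_num)
      exact lt_min one_pos (div_pos hε hD)
    have hθ18 : θ0 ≤ 1/8 := by
      have := min_le_left (1:ℝ) (ε / (1 + 2 * lam + ε))
      nlinarith
    have hθε : θ0 * (8 * (1 + 2 * lam + ε)) ≤ ε := by
      have h1 : θ0 ≤ (1/8) * (ε / (1 + 2 * lam + ε)) := by
        have := min_le_right (1:ℝ) (ε / (1 + 2 * lam + ε))
        nlinarith
      have h2 : (1/8) * (ε / (1 + 2 * lam + ε)) * (8 * (1 + 2 * lam + ε)) = ε := by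
        field_simp
      nlinarith [mul_le_mul_of_nonneg_right h1 (by positivity : (0:ℝ) ≤ 8 * (1 + 2 * lam + ε))]
    constructor
    · exact ⟨hθpos, by linarith⟩
    intro T S hT hQ hS x hx hTx
    set Q : X →L[ℝ] X := T - T ^ 2 with hQdef
    set r : ℝ := 4 * θ0 with hrdef
    have hr0 : 0 ≤ r := by positivity
    have hr12 : r ≤ 1/2 := by rw [hrdef]; linarith
    have hr1 : r < 1 := by linarith
    -- tail sum
    have h0 : (Nat.centralBinom 0 : ℝ) • Q ^ 0 = 1 := by
      simp [Nat.centralBinom_zero]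
    have htail : HasSum (fun m : ℕ => (Nat.centralBinom (m+1) : ℝ) • Q ^ (m+1)) (S - 1) := by
      refine (hasSum_nat_add_iff (f := fun m : ℕ => (Nat.centralBinom m : ℝ) • Q ^ m) 1).mpr ?_
      simpa [h0] using hS
    have hbound : ∀ m : ℕ, ‖(Nat.centralBinom (m+1) : ℝ) • Q ^ (m+1)‖ ≤ r ^ (m+1) := by
      intro m
      have hns := norm_smul ((Nat.centralBinom (m+1) : ℝ)) (Q ^ (m+1))
      rw [Real.norm_natCast] at hns
      rw [hns]
      have hc : (Nat.centralBinom (m+1) : ℝ) ≤ 4 ^ (m+1) := centralBinom_le_four_pow' (m+1)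
      have hqn : ‖Q ^ (m+1)‖ ≤ θ0 ^ (m+1) := by
        calc ‖Q ^ (m+1)‖ ≤ ‖Q‖ ^ (m+1) := norm_pow_le' Q (Nat.succ_pos m)
        _ ≤ θ0 ^ (m+1) := pow_le_pow_left₀ (norm_nonneg _) hQ _
      calc (Nat.centralBinom (m+1) : ℝ) * ‖Q ^ (m+1)‖
          ≤ 4 ^ (m+1) * θ0 ^ (m+1) := by
            apply mul_le_mul hc hqn (norm_nonneg _) (by positivity)
      _ = r ^ (m+1) := (mul_pow 4 θ0 (m+1)).symm
    have hgeom : Summable (fun m : ℕ => r ^ (m+1)) := by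
      have h := (summable_geometric_of_lt_one hr0 hr1).mul_left r
      exact h.congr fun m => by rw [pow_succ, mul_comm]
    have hsumnorm : Summable (fun m : ℕ => ‖(Nat.centralBinom (m+1) : ℝ) • Q ^ (m+1)‖) :=
      Summable.of_nonneg_of_le (fun _ => norm_nonneg _) hbound hgeom
    have hS1 : ‖S - 1‖ ≤ 8 * θ0 := by
      have hgeomsum : ∑' m : ℕ, r ^ (m+1) = r * (1 - r)⁻¹ := by
        rw [← tsum_geometric_of_lt_one hr0 hr1, ← tsum_mul_left]
        exact tsum_congr fun m => by rw [pow_succ, mul_comm]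
      have hinv : (1 - r)⁻¹ ≤ 2 := by
        rw [inv_le_comm₀ (by linarith) (by norm_num)]
        linarith
      calc ‖S - 1‖ = ‖∑' m : ℕ, (Nat.centralBinom (m+1) : ℝ) • Q ^ (m+1)‖ := by
            rw [htail.tsum_eq]
      _ ≤ ∑' m : ℕ, ‖(Nat.centralBinom (m+1) : ℝ) • Q ^ (m+1)‖ :=
            norm_tsum_le_tsum_norm hsumnorm
      _ ≤ ∑' m : ℕ, r ^ (m+1) := Summable.tsum_le_tsum hbound hsumnorm hgeom
      _ = r * (1 - r)⁻¹ := hgeomsum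
      _ ≤ r * 2 := by nlinarith
      _ = 8 * θ0 := by rw [hrdef]; ring
    -- norm of P - T
    set P : X →L[ℝ] X :=
      (1 / 2 : ℝ) • ((1 : X →L[ℝ] X) - ((1 : X →L[ℝ] X) - 2 • T) * S) with hPdef
    have hkey : P - T = (1/2 : ℝ) • (((1 : X →L[ℝ] X) - 2 • T) * (1 - S)) :=
      key_identity T S
    have h1T : ‖(1 : X →L[ℝ] X) - 2 • T‖ ≤ 1 + 2 * lam := by
      calc ‖(1 : X →L[ℝ] X) - 2 • T‖ ≤ ‖(1 : X →L[ℝ] X)‖ + ‖2 • T‖ := norm_sub_le _ _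
      _ ≤ 1 + 2 * lam := by
          have hid : ‖(1 : X →L[ℝ] X)‖ ≤ 1 := ContinuousLinearMap.norm_id_le
          have h2T : ‖(2:ℕ) • T‖ ≤ 2 * ‖T‖ := by
            rw [two_smul]; calc ‖T + T‖ ≤ ‖T‖ + ‖T‖ := norm_add_le _ _
            _ = 2 * ‖T‖ := by ring
          have := norm_nonneg T
          nlinarith
    have h1S : ‖(1 : X →L[ℝ] X) - S‖ ≤ 8 * θ0 := by
      rw [← norm_neg]; simpa using hS1
    have hPT : ‖P - T‖ ≤ (1 + 2 * lam) * (4 * θ0) := by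
      have hns := norm_smul ((1/2 : ℝ)) (((1 : X →L[ℝ] X) - 2 • T) * (1 - S))
      rw [hkey, hns]
      have hmul := norm_mul_le ((1 : X →L[ℝ] X) - 2 • T) (1 - S)
      have hb : ‖(1 - 2 • T : X →L[ℝ] X)‖ * ‖(1 - S : X →L[ℝ] X)‖ ≤ (1 + 2 * lam) * (8 * θ0) :=
        mul_le_mul h1T h1S (norm_nonneg _) (by linarith)
      have h12 : ‖(1/2 : ℝ)‖ = 1/2 := by norm_num [Real.norm_eq_abs]
      rw [h12]
      linarith
    have hPTx : ‖(P - T) x‖ ≤ (1 + 2 * lam) * (4 * θ0) := by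
      calc ‖(P - T) x‖ ≤ ‖P - T‖ * ‖x‖ := (P - T).le_opNorm x
      _ ≤ (1 + 2 * lam) * (4 * θ0) * 1 := by
          apply mul_le_mul hPT hx (norm_nonneg _) (by positivity)
      _ = (1 + 2 * lam) * (4 * θ0) := mul_one _
    have hsmall : (1 + 2 * lam) * (4 * θ0) ≤ ε / 2 := by nlinarith
    have hsplit : P x - x = (P - T) x + (T x - x) := by
      rw [ContinuousLinearMap.sub_apply]; abel
    calc ‖P x - x‖ = ‖(P - T) x + (T x - x)‖ := by rw [hsplit]
    _ ≤ ‖(P - T) x‖ + ‖T x - x‖ := norm_add_le _ _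
    _ < ε / 2 + ε / 2 := by
        apply add_lt_add_of_le_of_lt (le_trans hPTx hsmall) hTx
    _ = ε := by ring
end
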